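/- Let m > 2, let f : (Fin m → ZMod 2) → ZMod 4 be bent, and let a, b : (Fin m → ZMod 2) → ZMod 2 satisfy f(x) = ((a x).val : ZMod 4) + 2 * ((b x).val : ZMod 4) for all x (the 2-adic expansion of f). Then both a and b have algebraic degree at most ⌈m/2⌉ = (m+1)/2; that is, for every S : Finset (Fin m) with S.card > (m+1)/2, the algebraic-normal-form coefficient of a at S vanishes, i.e. ∑ over all x : Fin m → ZMod 2 with support contained in S (meaning x j = 1 → j ∈ S) of a(x) equals 0 in ZMod 2, and likewise for b. -/

import Mathlib

/-- The Fourier transform of a `ZMod 4`-valued generalized Boolean function. -/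
noncomputable def fourier4 {m : ℕ} (f : (Fin m → ZMod 2) → ZMod 4) (u : Fin m → ZMod 2) : ℂ :=
  ∑ x : Fin m → ZMod 2, Complex.I ^ (f x).val * (-1 : ℂ) ^ (∑ j, u j * x j).val

section Aux

/-- The sign character on `ZMod 2`. -/
def sg (z : ZMod 2) : ℤ := if z = 0 then 1 else -1

lemma zmod2_cases (z : ZMod 2) : z = 0 ∨ z = 1 := by revert z; decide
lemma sg_add (z w : ZMod 2) : sg (z + w) = sg z * sg w := by revert z w; decide
lemma sg_vals (z : ZMod 2) : sg z = 1 - 2 * (z.val : ℤ) := by revert z; decide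
lemma val_cast_zmod2 (z : ZMod 2) : ((z.val : ℕ) : ZMod 2) = z := by revert z; decide

/-- Integer-valued Walsh transform of a Boolean function. -/
def walsh {m : ℕ} (g : (Fin m → ZMod 2) → ZMod 2) (u : Fin m → ZMod 2) : ℤ :=
  ∑ x : Fin m → ZMod 2, sg (g x + ∑ j, u j * x j)

/-- The subcube of vectors supported in `S`. -/
def cube {m : ℕ} (S : Finset (Fin m)) : Finset (Fin m → ZMod 2) :=
  Finset.univ.filter (fun x => ∀ j, x j = 1 → j ∈ S)

lemma mem_cube {m : ℕ} {S : Finset (Fin m)} {x : Fin m → ZMod 2} :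
    x ∈ cube S ↔ ∀ j, x j = 1 → j ∈ S := by
  simp [cube]

lemma cube_card {m : ℕ} (S : Finset (Fin m)) : (cube S).card = 2 ^ S.card := by
  have h : cube S =
      Fintype.piFinset (fun j => if j ∈ S then (Finset.univ : Finset (ZMod 2)) else {0}) := by
    ext u
    simp only [mem_cube, Fintype.mem_piFinset]
    constructor
    · intro h j
      by_cases hj : j ∈ S
      · simp [hj]
      · simp only [hj, if_false, Finset.mem_singleton]
        rcases zmod2_cases (u j) with h0 | h1
        · exact h0
        · exact absurd (h j h1) hj
    · intro h j hj1
      by_cases hj : j ∈ S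
      · exact hj
      · have := h j; simp [hj, hj1] at this
  rw [h, Fintype.card_piFinset]
  have : ∀ j : Fin m, ((if j ∈ S then (Finset.univ : Finset (ZMod 2)) else {0}).card)
      = if j ∈ S then 2 else 1 := by
    intro j; split <;> simp
  rw [Finset.prod_congr rfl (fun j _ => this j)]
  rw [Finset.prod_ite_mem, Finset.univ_inter, Finset.prod_const]

lemma cubeCharSum {m : ℕ} (T : Finset (Fin m)) (x : Fin m → ZMod 2) :
    ∑ u ∈ cube T, sg (∑ j, u j * x j) =
      if ∀ j, x j = 1 → j ∉ T then (2 ^ T.card : ℤ) else 0 := by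
  split_ifs with hx
  · have h1 : ∀ u ∈ cube T, sg (∑ j, u j * x j) = 1 := by
      intro u hu
      have hz : (∑ j, u j * x j) = 0 := by
        apply Finset.sum_eq_zero
        intro j _
        rcases zmod2_cases (u j) with h0 | h1
        · simp [h0]
        · rcases zmod2_cases (x j) with h0 | h1'
          · simp [h0]
          · exact absurd (mem_cube.1 hu j h1) (hx j h1')
      simp [hz, sg]
    rw [Finset.sum_congr rfl h1, Finset.sum_const, cube_card]; simp
  · push_neg at hx
    obtain ⟨j₀, hx1, hj₀⟩ := hx
    set δ : Fin m → ZMod 2 := fun j => if j = j₀ then 1 else 0 with hδ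
    have hdot : ∀ u : Fin m → ZMod 2, (∑ j, (u + δ) j * x j) = (∑ j, u j * x j) + 1 := by
      intro u
      have : (∑ j, (u + δ) j * x j) = (∑ j, u j * x j) + ∑ j, δ j * x j := by
        rw [← Finset.sum_add_distrib]
        exact Finset.sum_congr rfl (fun j _ => by simp [add_mul])
      rw [this]
      congr 1
      rw [show (∑ j, δ j * x j) = ∑ j, if j = j₀ then x j else 0 by
        exact Finset.sum_congr rfl (fun j _ => by by_cases h : j = j₀ <;> simp [hδ, h])]
      simp [hx1]
    apply Finset.sum_involution (fun u _ => u + δ)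
    · intro u hu
      rw [hdot u, sg_add]
      have : sg 1 = -1 := rfl
      rw [this]; ring
    · intro u hu _
      intro h
      have := congrFun h j₀
      simp [hδ] at this
    · intro u hu
      rw [mem_cube] at hu ⊢
      intro j hj
      by_cases h : j = j₀
      · exact h ▸ hj₀
      · apply hu j
        simpa [hδ, h] using hj
    · intro u hu
      funext j
      show u j + δ j + δ j = u j
      rw [add_assoc, CharTwo.add_self_eq_zero, add_zero]

lemma poisson {m : ℕ} (g : (Fin m → ZMod 2) → ZMod 2) (S : Finset (Fin m)) :
    ∑ u ∈ cube Sᶜ, walsh g u = 2 ^ (m - S.card) * ∑ x ∈ cube S, sg (g x) := by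
  unfold walsh
  rw [Finset.sum_comm]
  have h1 : ∀ x : Fin m → ZMod 2,
      ∑ u ∈ cube Sᶜ, sg (g x + ∑ j, u j * x j)
        = sg (g x) * (if ∀ j, x j = 1 → j ∈ S then (2 ^ Sᶜ.card : ℤ) else 0) := by
    intro x
    rw [show (∑ u ∈ cube Sᶜ, sg (g x + ∑ j, u j * x j))
        = sg (g x) * ∑ u ∈ cube Sᶜ, sg (∑ j, u j * x j) by
      rw [Finset.mul_sum]; exact Finset.sum_congr rfl (fun u _ => by rw [sg_add])]
    rw [cubeCharSum]
    congr 2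
    simp [Finset.mem_compl]
  rw [Finset.sum_congr rfl (fun x _ => h1 x)]
  have hcard : Sᶜ.card = m - S.card := by
    rw [Finset.card_compl]; simp
  simp only [mul_ite, mul_zero]
  rw [Finset.sum_ite, Finset.sum_const_zero, add_zero]
  rw [hcard, Finset.mul_sum]
  apply Finset.sum_congr rfl
  intro x _
  ring

lemma hv : ∀ av bv : ZMod 2,
    (((av.val : ZMod 4)) + 2 * (bv.val : ZMod 4)).val = av.val + 2 * bv.val := by decide

lemma termeq (av bv d : ZMod 2) :
    (Complex.I ^ (((av.val : ZMod 4) + 2 * (bv.val : ZMod 4)).val) * (-1 : ℂ) ^ d.val) * 2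
      = (1 + Complex.I) * ((sg (bv + d) : ℤ) : ℂ)
        + (1 - Complex.I) * ((sg (av + bv + d) : ℤ) : ℂ) := by
  rw [hv, pow_add, pow_mul, Complex.I_sq]
  rcases zmod2_cases av with rfl | rfl <;> rcases zmod2_cases bv with rfl | rfl <;>
    rcases zmod2_cases d with rfl | rfl <;>
      simp [sg, ZMod.val_one, show (1 + 1 : ZMod 2) = 0 from rfl] <;> ring

lemma fourier_eq {m : ℕ} (f : (Fin m → ZMod 2) → ZMod 4)
    (a b : (Fin m → ZMod 2) → ZMod 2)
    (hab : ∀ x, f x = ((a x).val : ZMod 4) + 2 * ((b x).val : ZMod 4))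
    (u : Fin m → ZMod 2) :
    2 * fourier4 f u
      = (1 + Complex.I) * ((walsh b u : ℤ) : ℂ)
        + (1 - Complex.I) * ((walsh (fun x => a x + b x) u : ℤ) : ℂ) := by
  unfold fourier4 walsh
  push_cast
  rw [Finset.mul_sum, Finset.mul_sum, Finset.mul_sum, ← Finset.sum_add_distrib]
  apply Finset.sum_congr rfl
  intro x _
  rw [hab x, mul_comm]
  exact termeq (a x) (b x) _

lemma sq_eq {m : ℕ} (f : (Fin m → ZMod 2) → ZMod 4)
    (a b : (Fin m → ZMod 2) → ZMod 2)
    (hab : ∀ x, f x = ((a x).val : ZMod 4) + 2 * ((b x).val : ZMod 4))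
    (hf : ∀ u, Complex.normSq (fourier4 f u) = 2 ^ m)
    (u : Fin m → ZMod 2) :
    (walsh b u) ^ 2 + (walsh (fun x => a x + b x) u) ^ 2 = 2 ^ (m + 1) := by
  have h1 : Complex.normSq (2 * fourier4 f u) = 2 ^ (m + 2) := by
    rw [Complex.normSq_mul, hf u]
    norm_num [Complex.normSq]
    ring
  rw [fourier_eq f a b hab u] at h1
  set B : ℝ := ((walsh b u : ℤ) : ℝ) with hB
  set C : ℝ := ((walsh (fun x => a x + b x) u : ℤ) : ℝ) with hC
  have h2 : (1 + Complex.I) * ((walsh b u : ℤ) : ℂ)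
      + (1 - Complex.I) * ((walsh (fun x => a x + b x) u : ℤ) : ℂ)
      = ((B + C : ℝ) : ℂ) + ((B - C : ℝ) : ℂ) * Complex.I := by
    push_cast [hB, hC]; ring
  rw [h2, Complex.normSq_add_mul_I] at h1
  have h3 : B ^ 2 + C ^ 2 = 2 ^ (m + 1) := by
    have e1 : (2 : ℝ) ^ (m + 2) = 2 * 2 ^ (m + 1) := by ring
    have e2 : (B + C) ^ 2 + (B - C) ^ 2 = 2 * (B ^ 2 + C ^ 2) := by ring
    rw [e1, e2] at h1
    linarith
  have h4 : ((walsh b u) ^ 2 + (walsh (fun x => a x + b x) u) ^ 2 : ℝ)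
      = ((2 : ℤ) ^ (m + 1) : ℝ) := by
    push_cast
    rw [← hB, ← hC]
    linarith [h3]
  exact_mod_cast h4

lemma two_sq_pow : ∀ n : ℕ, ∀ B C : ℤ, B ^ 2 + C ^ 2 = 2 ^ n →
    ∃ B' C', B = 2 ^ (n / 2) * B' ∧ C = 2 ^ (n / 2) * C' ∧ B' ^ 2 + C' ^ 2 = 2 ^ (n % 2) := by
  intro n
  induction n using Nat.strong_induction_on with
  | _ n ih =>
    match n with
    | 0 => intro B C h; exact ⟨B, C, by simp, by simp, by simpa using h⟩
    | 1 => intro B C h; exact ⟨B, C, by simp, by simp, by simpa using h⟩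
    | (n + 2) =>
      intro B C h
      have hBE : Even B ∧ Even C := by
        rcases Int.even_or_odd B with hB | hB <;> rcases Int.even_or_odd C with hC | hC
        · exact ⟨hB, hC⟩
        · exfalso
          obtain ⟨k, hk⟩ := hB; obtain ⟨l, hl⟩ := hC
          rw [hk, hl, show k + k = 2 * k by ring] at h
          rw [show (2 * k) ^ 2 + (2 * l + 1) ^ 2 = 4 * (k ^ 2 + l ^ 2 + l) + 1 by ring] at h
          have h2 : (2 : ℤ) ^ (n + 2) = 4 * 2 ^ n := by ring
          omega
        · exfalso
          obtain ⟨k, hk⟩ := hC; obtain ⟨l, hl⟩ := hB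
          rw [hk, hl, show k + k = 2 * k by ring] at h
          rw [show (2 * l + 1) ^ 2 + (2 * k) ^ 2 = 4 * (k ^ 2 + l ^ 2 + l) + 1 by ring] at h
          have h2 : (2 : ℤ) ^ (n + 2) = 4 * 2 ^ n := by ring
          omega
        · exfalso
          obtain ⟨k, hk⟩ := hB; obtain ⟨l, hl⟩ := hC
          rw [hk, hl, show (2 * k + 1) ^ 2 + (2 * l + 1) ^ 2
            = 4 * (k ^ 2 + k + l ^ 2 + l) + 2 by ring] at h
          have h2 : (2 : ℤ) ^ (n + 2) = 4 * 2 ^ n := by ring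
          omega
      obtain ⟨⟨B1, hB1⟩, ⟨C1, hC1⟩⟩ := hBE
      have hB1' : B = 2 * B1 := by omega
      have hC1' : C = 2 * C1 := by omega
      have h' : B1 ^ 2 + C1 ^ 2 = 2 ^ n := by
        have : 4 * (B1 ^ 2 + C1 ^ 2) = 4 * 2 ^ n := by
          rw [show (4 : ℤ) * 2 ^ n = 2 ^ (n + 2) by ring, ← h, hB1', hC1']; ring
        omega
      obtain ⟨B', C', e1, e2, e3⟩ := ih n (by omega) B1 C1 h'
      refine ⟨B', C', ?_, ?_, ?_⟩
      · rw [hB1', e1, show (n + 2) / 2 = n / 2 + 1 by omega]; ring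
      · rw [hC1', e2, show (n + 2) / 2 = n / 2 + 1 by omega]; ring
      · rw [show (n + 2) % 2 = n % 2 by omega]; exact e3

lemma odd_cast_zmod2 {e : ℤ} (he : Odd e) : ((e : ZMod 2) = 1) := by
  obtain ⟨c, hc⟩ := he
  rw [hc]; push_cast
  rw [show ((2 : ZMod 2)) = 0 by rfl]; ring

lemma resid1 {B C : ℤ} (h : B ^ 2 + C ^ 2 = 2) : Odd B ∧ Odd C := by
  have hb1 : B ≤ 1 := by nlinarith [sq_nonneg C, sq_nonneg (B - 1)]
  have hb2 : -1 ≤ B := by nlinarith [sq_nonneg C, sq_nonneg (B + 1)]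
  have hc1 : C ≤ 1 := by nlinarith [sq_nonneg B, sq_nonneg (C - 1)]
  have hc2 : -1 ≤ C := by nlinarith [sq_nonneg B, sq_nonneg (C + 1)]
  interval_cases B <;> interval_cases C <;> (revert h; norm_num)

/-- Main per-function lemma: if every Walsh value of `g` is `2^⌈m/2⌉` times an integer
which is odd when `m` is even, then every high-degree ANF coefficient of `g` vanishes. -/
lemma anf_zero {m : ℕ} (hm : 2 < m) (g : (Fin m → ZMod 2) → ZMod 2)
    (e : (Fin m → ZMod 2) → ℤ)
    (hg : ∀ u, walsh g u = 2 ^ ((m + 1) / 2) * e u)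
    (hodd : (m + 1) % 2 = 1 → ∀ u, Odd (e u))
    (S : Finset (Fin m)) (hS : S.card > (m + 1) / 2) :
    ∑ x ∈ cube S, g x = 0 := by
  have hkm : S.card ≤ m := by
    have := Finset.card_le_univ S
    simpa using this
  set t := (m + 1) / 2 with ht
  set k := m - S.card with hk
  have ht2 : 2 * t + (m + 1) % 2 = m + 1 := by omega
  have hdvd : (2 : ℤ) ^ (k + 2) ∣ ∑ u ∈ cube Sᶜ, walsh g u := by
    by_cases hc : k + 2 ≤ t
    · apply Finset.dvd_sum
      intro u _
      rw [hg u]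
      exact Dvd.dvd.mul_right (pow_dvd_pow 2 hc) _
    · have hr1 : (m + 1) % 2 = 1 := by omega
      have hkt : k + 2 = t + 1 := by omega
      have hk1 : 1 ≤ k := by omega
      have hsum : ∑ u ∈ cube Sᶜ, walsh g u = 2 ^ t * ∑ u ∈ cube Sᶜ, e u := by
        rw [Finset.mul_sum]; exact Finset.sum_congr rfl (fun u _ => hg u)
      have hE : (2 : ℤ) ∣ ∑ u ∈ cube Sᶜ, e u := by
        have hcast : ((∑ u ∈ cube Sᶜ, e u : ℤ) : ZMod 2) = 0 := by
          push_cast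
          rw [Finset.sum_congr rfl (fun u _ => odd_cast_zmod2 (hodd hr1 u))]
          rw [Finset.sum_const, cube_card]
          have hck : Sᶜ.card = k := by
            rw [Finset.card_compl]; simp [hk]
          rw [hck]
          simp only [nsmul_eq_mul, mul_one]
          rw [show ((2 ^ k : ℕ) : ZMod 2) = ((2 : ZMod 2)) ^ k by push_cast; ring]
          rw [show ((2 : ZMod 2)) = 0 by rfl]
          exact zero_pow (by omega)
        exact (ZMod.intCast_zmod_eq_zero_iff_dvd _ 2).mp hcast
      obtain ⟨E, hEe⟩ := hE
      rw [hsum, hEe, hkt]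
      exact ⟨E, by ring⟩
  rw [poisson g S, ← hk] at hdvd
  have h4 : (4 : ℤ) ∣ ∑ x ∈ cube S, sg (g x) := by
    obtain ⟨q, hq⟩ := hdvd
    refine ⟨q, ?_⟩
    have h2k : (2 : ℤ) ^ k ≠ 0 := by positivity
    apply mul_left_cancel₀ h2k
    rw [hq]; ring
  have hW : ∑ x ∈ cube S, sg (g x)
      = 2 ^ S.card - 2 * ∑ x ∈ cube S, ((g x).val : ℤ) := by
    rw [Finset.sum_congr rfl (fun x _ => sg_vals (g x))]
    rw [Finset.sum_sub_distrib, Finset.sum_const, cube_card, Finset.mul_sum]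
    ring
  have hS2 : 2 ≤ S.card := by omega
  have h4' : (4 : ℤ) ∣ 2 ^ S.card := by
    refine ⟨2 ^ (S.card - 2), ?_⟩
    rw [show (4 : ℤ) = 2 ^ 2 by norm_num, ← pow_add]
    congr 1
    omega
  have hV : (2 : ℤ) ∣ ∑ x ∈ cube S, ((g x).val : ℤ) := by
    obtain ⟨q1, hq1⟩ := h4
    obtain ⟨q2, hq2⟩ := h4'
    refine ⟨q2 - q1, ?_⟩
    have := hW
    rw [hq1, hq2] at this
    linarith
  have hcast : ((∑ x ∈ cube S, ((g x).val : ℤ) : ℤ) : ZMod 2) = 0 :=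
    (ZMod.intCast_zmod_eq_zero_iff_dvd _ 2).mpr hV
  push_cast at hcast
  rw [Finset.sum_congr rfl (fun x _ => val_cast_zmod2 (g x))] at hcast
  exact hcast

end Aux

/-- If `f = a + 2b` is a `ZMod 4`-valued bent function in `m > 2` variables, then both `a`
and `b` have algebraic degree at most `⌈m/2⌉`: every ANF coefficient at a set `S` with
`|S| > ⌈m/2⌉` vanishes. -/
theorem stmt4 (m : ℕ) (hm : 2 < m) (f : (Fin m → ZMod 2) → ZMod 4)
    (hf : ∀ u, Complex.normSq (fourier4 f u) = 2 ^ m)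
    (a b : (Fin m → ZMod 2) → ZMod 2)
    (hab : ∀ x, f x = ((a x).val : ZMod 4) + 2 * ((b x).val : ZMod 4)) :
    ∀ S : Finset (Fin m), S.card > (m + 1) / 2 →
      (∑ x ∈ Finset.univ.filter (fun x : Fin m → ZMod 2 => ∀ j, x j = 1 → j ∈ S), a x) = 0 ∧
      (∑ x ∈ Finset.univ.filter (fun x : Fin m → ZMod 2 => ∀ j, x j = 1 → j ∈ S), b x) = 0 := by
  intro S hS
  set c : (Fin m → ZMod 2) → ZMod 2 := fun x => a x + b x with hc
  have hsq : ∀ u, (walsh b u) ^ 2 + (walsh c u) ^ 2 = 2 ^ (m + 1) :=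
    fun u => sq_eq f a b hab hf u
  choose B' C' hB hC hBC using fun u => two_sq_pow (m + 1) _ _ (hsq u)
  have hoddB : (m + 1) % 2 = 1 → ∀ u, Odd (B' u) := by
    intro hr u
    have := hBC u
    rw [hr, pow_one] at this
    exact (resid1 this).1
  have hoddC : (m + 1) % 2 = 1 → ∀ u, Odd (C' u) := by
    intro hr u
    have := hBC u
    rw [hr, pow_one] at this
    exact (resid1 this).2
  have hb0 : ∑ x ∈ cube S, b x = 0 := anf_zero hm b B' hB hoddB S hS
  have hc0 : ∑ x ∈ cube S, c x = 0 := anf_zero hm c C' hC hoddC S hS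
  constructor
  · show ∑ x ∈ cube S, a x = 0
    have : ∀ x, a x = b x + c x := by
      intro x
      rw [hc]
      show a x = b x + (a x + b x)
      rw [show b x + (a x + b x) = a x + (b x + b x) by ring, CharTwo.add_self_eq_zero, add_zero]
    rw [Finset.sum_congr rfl (fun x _ => this x), Finset.sum_add_distrib, hb0, hc0, add_zero]
  · exact hb0
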